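/- Let G be a graph on vertex set [x+d] (with x > 4, d ≥ 1) having exactly x edges and a vertex v of degree k with 2 ≤ k < x. Let A be the set of 3-element subsets {a,b,c} of [x+d] such that at least one of the pairs {a,b}, {b,c}, {a,c} is an edge of G. Then |A| ≥ x²/2 + ((2d-3)/2)·x + (k-1)(x-k), i.e., 2|A| ≥ x² + (2d-3)x + 2(k-1)(x-k). -/

import Mathlib

set_option linter.unusedSectionVars false
open Finset

variable {V : Type*} [Fintype V] [DecidableEq V]

/-- vertex set of a `Sym2`. -/
def vset (e : Sym2 V) : Finset V := Finset.univ.filter (· ∈ e)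

@[simp] lemma mem_vset {e : Sym2 V} {y : V} : y ∈ vset e ↔ y ∈ e := by
  simp [vset]

lemma vset_pair (a b : V) : vset s(a, b) = {a, b} := by
  ext y; simp [vset, Sym2.mem_iff]

lemma vset_card_eq_two {e : Sym2 V} (he : ¬ e.IsDiag) : (vset e).card = 2 := by
  induction e with
  | _ a b =>
    rw [vset_pair]
    rw [Sym2.mk_isDiag_iff] at he
    rw [card_insert_of_notMem (by simp [he]), card_singleton]

lemma vset_injOn {e f : Sym2 V} (he : ¬ e.IsDiag) (hf : ¬ f.IsDiag)
    (h : vset e = vset f) : e = f := by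
  induction e with
  | _ a b =>
    induction f with
    | _ c d =>
      rw [vset_pair, vset_pair] at h
      rw [Sym2.mk_isDiag_iff] at he hf
      have hc : c ∈ ({a, b} : Finset V) := by rw [h]; simp
      have hd : d ∈ ({a, b} : Finset V) := by rw [h]; simp
      have ha : a ∈ ({c, d} : Finset V) := by rw [← h]; simp
      simp only [mem_insert, mem_singleton] at hc hd ha
      rw [Sym2.eq_iff]
      rcases hc with rfl | rfl
      · rcases hd with rfl | rfl
        · exact absurd rfl hf
        · exact Or.inl ⟨rfl, rfl⟩
      · rcases hd with rfl | rfl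
        · exact Or.inr ⟨rfl, rfl⟩
        · exact absurd rfl hf

/-- counting 3-element supersets of a 2-element set -/
lemma card_supersets (t : Finset V) (ht : t.card = 2) :
    ((Finset.univ.powersetCard 3).filter (fun s => t ⊆ s)).card
      = Fintype.card V - 2 := by
  have himg : ((Finset.univ.powersetCard 3).filter (fun s => t ⊆ s))
      = tᶜ.image (fun c => insert c t) := by
    ext s
    simp only [mem_filter, Finset.mem_powersetCard_univ, mem_image, mem_compl]
    constructor
    · rintro ⟨hcard, hts⟩
      obtain ⟨c, hcs, hct⟩ : ∃ c ∈ s, c ∉ t := by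
        by_contra h
        push_neg at h
        have := card_le_card h
        omega
      refine ⟨c, hct, ?_⟩
      apply eq_of_subset_of_card_le (insert_subset hcs hts)
      rw [card_insert_of_notMem hct, ht, hcard]
    · rintro ⟨c, hct, rfl⟩
      exact ⟨by rw [card_insert_of_notMem hct, ht], subset_insert _ _⟩
  rw [himg, card_image_of_injOn, card_compl, ht]
  intro c hc c' hc' hcc
  simp only [mem_coe, mem_compl] at hc hc'
  simp only at hcc
  have : c ∈ insert c' t := hcc ▸ mem_insert_self c t
  rcases mem_insert.1 this with h | h
  · exact h
  · exact absurd h hc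

section Graph

variable (G : SimpleGraph V) [DecidableRel G.Adj]

/-- number of edges inside `s` -/
noncomputable def ecount (s : Finset V) : ℕ :=
  (G.edgeFinset.filter (fun e => vset e ⊆ s)).card

lemma not_isDiag_of_mem_edgeFinset {e : Sym2 V} (he : e ∈ G.edgeFinset) : ¬ e.IsDiag :=
  G.not_isDiag_of_mem_edgeSet (SimpleGraph.mem_edgeFinset.1 he)

lemma sum_ecount :
    ∑ s ∈ Finset.univ.powersetCard 3, ecount G s
      = G.edgeFinset.card * (Fintype.card V - 2) := by
  simp only [ecount, card_filter]
  rw [Finset.sum_comm]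
  rw [← Finset.sum_attach G.edgeFinset (fun e => ∑ s ∈ Finset.univ.powersetCard 3, if vset e ⊆ s then 1 else 0)]
  have : ∀ e : G.edgeFinset,
      (∑ s ∈ Finset.univ.powersetCard 3, if vset e.1 ⊆ s then 1 else 0) = Fintype.card V - 2 := by
    intro e
    rw [← Finset.card_filter]
    exact card_supersets _ (vset_card_eq_two (not_isDiag_of_mem_edgeFinset G e.2))
  rw [Finset.sum_congr rfl (fun e _ => this e), Finset.sum_const, smul_eq_mul,
    card_attach]

lemma filter_powersetCard {α : Type*} [DecidableEq α] (S : Finset α) (q : α → Prop)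
    [DecidablePred q] (n : ℕ) :
    (S.filter q).powersetCard n
      = (S.powersetCard n).filter (fun p => ∀ e ∈ p, q e) := by
  ext p
  simp only [mem_powersetCard, subset_iff, mem_filter]
  constructor
  · rintro ⟨h1, h2⟩
    exact ⟨⟨fun x hx => (h1 hx).1, h2⟩, fun e he => (h1 he).2⟩
  · rintro ⟨⟨h1, h2⟩, h3⟩
    exact ⟨fun x hx => ⟨h1 hx, h3 x hx⟩, h2⟩

lemma sup_vset_card_ge {p : Finset (Sym2 V)} (hp : p ∈ G.edgeFinset.powersetCard 2) :
    3 ≤ (p.sup vset).card := by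
  rw [mem_powersetCard] at hp
  obtain ⟨e, f, hef, rfl⟩ := Finset.card_eq_two.1 hp.2
  have he : e ∈ G.edgeFinset := hp.1 (by simp)
  have hf : f ∈ G.edgeFinset := hp.1 (by simp)
  have hsup : ({e, f} : Finset (Sym2 V)).sup vset = vset e ∪ vset f := by
    simp [Finset.sup_insert, Finset.sup_singleton]
  rw [hsup]
  have hne : vset e ≠ vset f := fun h => hef (vset_injOn
    (not_isDiag_of_mem_edgeFinset G he) (not_isDiag_of_mem_edgeFinset G hf) h)
  have hce := vset_card_eq_two (not_isDiag_of_mem_edgeFinset G he)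
  have hcf := vset_card_eq_two (not_isDiag_of_mem_edgeFinset G hf)
  by_contra h
  push_neg at h
  have h1 : vset e ⊆ vset e ∪ vset f := Finset.subset_union_left
  have h2 : vset f ⊆ vset e ∪ vset f := Finset.subset_union_right
  have he1 : vset e = vset e ∪ vset f := Finset.eq_of_subset_of_card_le h1 (by omega)
  have hf1 : vset f = vset e ∪ vset f := Finset.eq_of_subset_of_card_le h2 (by omega)
  exact hne (he1.trans hf1.symm)

lemma sum_choose_ecount :
    ∑ s ∈ Finset.univ.powersetCard 3, (ecount G s).choose 2
      = ((G.edgeFinset.powersetCard 2).filter (fun p => (p.sup vset).card = 3)).card := by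
  have step1 : ∀ s : Finset V, (ecount G s).choose 2
      = ((G.edgeFinset.powersetCard 2).filter (fun p => ∀ e ∈ p, vset e ⊆ s)).card := by
    intro s
    rw [ecount, ← Finset.card_powersetCard, filter_powersetCard]
    congr!
  simp only [step1, card_filter]
  rw [Finset.sum_comm]
  rw [← Finset.sum_attach (G.edgeFinset.powersetCard 2)
    (fun p => ∑ s ∈ Finset.univ.powersetCard 3, if ∀ e ∈ p, vset e ⊆ s then 1 else 0)]
  have key : ∀ p : G.edgeFinset.powersetCard 2,
      (∑ s ∈ Finset.univ.powersetCard 3, if ∀ e ∈ p.1, vset e ⊆ s then 1 else 0)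
        = if (p.1.sup vset).card = 3 then 1 else 0 := by
    intro p
    have hcond : ∀ s : Finset V, (∀ e ∈ p.1, vset e ⊆ s) ↔ p.1.sup vset ⊆ s := by
      intro s
      constructor
      · intro h
        exact Finset.sup_le (fun e he => h e he)
      · intro h e he
        exact le_trans (Finset.le_sup he) h
    simp only [hcond]
    rw [← Finset.card_filter]
    by_cases h3 : (p.1.sup vset).card = 3
    · rw [if_pos h3]
      have : (Finset.univ.powersetCard 3).filter (fun s => p.1.sup vset ⊆ s)
          = {p.1.sup vset} := by
        ext s
        simp only [mem_filter, Finset.mem_powersetCard_univ, mem_singleton]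
        constructor
        · rintro ⟨hc, hsub⟩
          exact (Finset.eq_of_subset_of_card_le hsub (by omega)).symm
        · rintro rfl
          exact ⟨h3, subset_rfl⟩
      rw [this, card_singleton]
    · rw [if_neg h3]
      have h4 : 4 ≤ (p.1.sup vset).card := by
        have := sup_vset_card_ge G p.2
        omega
      have : (Finset.univ.powersetCard 3).filter (fun s => p.1.sup vset ⊆ s) = ∅ := by
        ext s
        simp only [mem_filter, Finset.mem_powersetCard_univ, Finset.notMem_empty, iff_false,
          not_and]
        intro hc hsub
        have := Finset.card_le_card hsub
        omega
      rw [this, card_empty]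
  rw [Finset.sum_congr rfl (fun p _ => key p)]
  rw [← Finset.sum_attach ((G.edgeFinset.powersetCard 2))
    (fun p => if (p.sup vset).card = 3 then 1 else 0), ← Finset.card_filter]

lemma stepA (v a b : V) (hab : a ≠ b) (hva : v ≠ a) (hvb : v ≠ b) :
    (G.edgeFinset.filter (fun e => v ∈ e)).card - 1
      ≤ ((G.edgeFinset.filter (fun e => v ∈ e)).filter
           (fun e => Disjoint (vset e) (vset s(a, b)))).card
        + (if ∀ y ∈ s(a, b), G.Adj v y then 1 else 0) := by
  set Sv := G.edgeFinset.filter (fun e => v ∈ e) with hSv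
  have hsplit := Finset.card_filter_add_card_filter_not
    (s := Sv) (p := fun e => Disjoint (vset e) (vset s(a, b)))
  have hsub : Sv.filter (fun e => ¬ Disjoint (vset e) (vset s(a, b)))
      ⊆ {s(v, a), s(v, b)} := by
    intro e he
    simp only [mem_filter, hSv] at he
    obtain ⟨⟨heS, hve⟩, hnd⟩ := he
    obtain ⟨w, rfl⟩ := Sym2.mem_iff_exists.1 hve
    rw [Finset.not_disjoint_iff] at hnd
    obtain ⟨y, hy1, hy2⟩ := hnd
    rw [vset_pair, mem_insert, mem_singleton] at hy1 hy2
    simp only [mem_insert, mem_singleton]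
    rcases hy1 with rfl | rfl
    · rcases hy2 with rfl | rfl
      · exact absurd rfl hva
      · exact absurd rfl hvb
    · rcases hy2 with rfl | rfl
      · left; rfl
      · right; rfl
  by_cases ht : ∀ y ∈ s(a, b), G.Adj v y
  · rw [if_pos ht]
    have h2 : (Sv.filter (fun e => ¬ Disjoint (vset e) (vset s(a, b)))).card ≤ 2 :=
      le_trans (card_le_card hsub) (card_insert_le _ _ |>.trans (by simp))
    omega
  · rw [if_neg ht]
    push_neg at ht
    obtain ⟨y, hy, hny⟩ := ht
    rw [Sym2.mem_iff] at hy
    have h1 : (Sv.filter (fun e => ¬ Disjoint (vset e) (vset s(a, b)))).card ≤ 1 := by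
      rcases hy with rfl | rfl
      · -- ¬ Adj v y, y = a : s(v,a) not an edge
        have : Sv.filter (fun e => ¬ Disjoint (vset e) (vset s(y, b))) ⊆ {s(v, b)} := by
          intro e he
          have h' := hsub he
          simp only [mem_insert, mem_singleton] at h' ⊢
          rcases h' with rfl | rfl
          · exfalso
            have := (mem_filter.1 he).1
            have := (mem_filter.1 this).1
            rw [SimpleGraph.mem_edgeFinset, SimpleGraph.mem_edgeSet] at this
            exact hny this
          · rfl
        exact le_trans (card_le_card this) (by simp)
      · have : Sv.filter (fun e => ¬ Disjoint (vset e) (vset s(a, y))) ⊆ {s(v, a)} := by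
          intro e he
          have h' := hsub he
          simp only [mem_insert, mem_singleton] at h' ⊢
          rcases h' with rfl | rfl
          · rfl
          · exfalso
            have := (mem_filter.1 he).1
            have := (mem_filter.1 this).1
            rw [SimpleGraph.mem_edgeFinset, SimpleGraph.mem_edgeSet] at this
            exact hny this
        exact le_trans (card_le_card this) (by simp)
    omega

lemma stepB (v : V) :
    ∑ f ∈ G.edgeFinset.filter (fun e => v ∉ e),
        ((G.edgeFinset.filter (fun e => v ∈ e)).filter
          (fun e => Disjoint (vset e) (vset f))).card
      ≤ ((G.edgeFinset.powersetCard 2).filter (fun p => (p.sup vset).card ≠ 3)).card := by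
  classical
  set F := G.edgeFinset.filter (fun e => v ∉ e) with hF
  set Dset := (G.edgeFinset.powersetCard 2).filter (fun p => (p.sup vset).card ≠ 3) with hD
  set B : Sym2 V → Finset (Finset (Sym2 V)) :=
    fun f => Dset.filter (fun p => f ∈ p ∧ ∃ e ∈ p, v ∈ e) with hB
  have step1 : ∀ f ∈ F,
      ((G.edgeFinset.filter (fun e => v ∈ e)).filter
        (fun e => Disjoint (vset e) (vset f))).card ≤ (B f).card := by
    intro f hf
    simp only [hF, mem_filter] at hf
    apply Finset.card_le_card_of_injOn (fun e => ({e, f} : Finset (Sym2 V)))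
    · intro e he
      simp only [mem_coe, mem_filter] at he
      obtain ⟨⟨heS, hve⟩, hdisj⟩ := he
      have hef : e ≠ f := fun h => hf.2 (h ▸ hve)
      have hPC : ({e, f} : Finset (Sym2 V)) ∈ G.edgeFinset.powersetCard 2 := by
        rw [mem_powersetCard]
        constructor
        · intro z hz
          simp only [mem_insert, mem_singleton] at hz
          rcases hz with rfl | rfl
          · exact heS
          · exact hf.1
        · rw [card_insert_of_notMem (by simpa using hef), card_singleton]
      have hsup : ({e, f} : Finset (Sym2 V)).sup vset = vset e ∪ vset f := by
        simp [Finset.sup_insert, Finset.sup_singleton]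
      simp only [hB, hD, mem_coe, mem_filter]
      refine ⟨⟨hPC, ?_⟩, by simp, ⟨e, by simp, hve⟩⟩
      rw [hsup, card_union_of_disjoint hdisj,
        vset_card_eq_two (not_isDiag_of_mem_edgeFinset G heS),
        vset_card_eq_two (not_isDiag_of_mem_edgeFinset G hf.1)]
      omega
    · intro e he e' he' hee
      simp only at hee
      have hef : e ≠ f := by
        simp only [mem_coe, mem_filter] at he
        exact fun h => hf.2 (h ▸ he.1.2)
      have : e ∈ ({e', f} : Finset (Sym2 V)) := hee ▸ mem_insert_self e {f}
      simp only [mem_insert, mem_singleton] at this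
      rcases this with h | h
      · exact h
      · exact absurd h hef
  calc ∑ f ∈ F, ((G.edgeFinset.filter (fun e => v ∈ e)).filter
          (fun e => Disjoint (vset e) (vset f))).card
      ≤ ∑ f ∈ F, (B f).card := Finset.sum_le_sum step1
    _ = (F.biUnion B).card := by
        rw [Finset.card_biUnion]
        intro f hf g hg hfg
        simp only [Finset.disjoint_left]
        intro p hp hq
        simp only [hB, hD, mem_filter, mem_powersetCard] at hp hq
        obtain ⟨⟨⟨hpS, hcard⟩, _⟩, hfp, e, hep, hve⟩ := hp
        obtain ⟨_, hgp, _⟩ := hq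
        have hfg2 : ({f, g} : Finset (Sym2 V)).card = 2 := by
          rw [card_insert_of_notMem (by simpa using hfg), card_singleton]
        have hpfg : p = {f, g} :=
          (Finset.eq_of_subset_of_card_le
            (insert_subset hfp (Finset.singleton_subset_iff.2 hgp))
            (by rw [hcard, hfg2])).symm
        subst hpfg
        simp only [mem_insert, mem_singleton] at hep
        simp only [hF, mem_coe, mem_filter] at hf hg
        rcases hep with rfl | rfl
        · exact hf.2 hve
        · exact hg.2 hve
    _ ≤ Dset.card := card_le_card (by
        intro p hp
        obtain ⟨f, _, hpf⟩ := Finset.mem_biUnion.1 hp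
        exact (mem_filter.1 hpf).1)

lemma stepC (v : V) :
    ((G.edgeFinset.filter (fun e => v ∉ e)).filter (fun f => ∀ y ∈ f, G.Adj v y)).card
      ≤ ((Finset.univ.powersetCard 3).filter (fun s => 3 ≤ ecount G s)).card := by
  apply Finset.card_le_card_of_injOn (fun f => insert v (vset f))
  · intro f hf
    simp only [mem_coe, mem_filter] at hf
    obtain ⟨⟨hfS, hvf⟩, hadj⟩ := hf
    have hvnot : v ∉ vset f := by simpa using hvf
    have hc2 := vset_card_eq_two (not_isDiag_of_mem_edgeFinset G hfS)
    simp only [mem_coe, mem_filter, Finset.mem_powersetCard_univ]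
    constructor
    · rw [card_insert_of_notMem hvnot, hc2]
    · -- 3 ≤ ecount G (insert v (vset f))
      obtain ⟨a, b, rfl⟩ : ∃ a b, f = s(a, b) := by
        induction f with
        | _ a b => exact ⟨a, b, rfl⟩
      · have hab : a ≠ b := by
          intro h
          exact not_isDiag_of_mem_edgeFinset G hfS (by simp [h, Sym2.mk_isDiag_iff])
        have hva : v ≠ a := fun h => hvf (by simp [h, Sym2.mem_iff])
        have hvb : v ≠ b := fun h => hvf (by simp [h, Sym2.mem_iff])
        have hAa : G.Adj v a := hadj a (by simp [Sym2.mem_iff])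
        have hAb : G.Adj v b := hadj b (by simp [Sym2.mem_iff])
        set t : Finset V := insert v (vset s(a, b)) with hts
        have hsub : ({s(a, b), s(v, a), s(v, b)} : Finset (Sym2 V))
            ⊆ G.edgeFinset.filter (fun e => vset e ⊆ t) := by
          intro e he
          simp only [mem_insert, mem_singleton] at he
          have hmem : ∀ y : V, y ∈ t ↔ y = v ∨ y = a ∨ y = b := by
            intro y
            simp [hts, vset_pair, mem_insert, mem_singleton]
          rcases he with rfl | rfl | rfl
          · refine mem_filter.2 ⟨hfS, ?_⟩
            intro y hy
            rw [vset_pair, mem_insert, mem_singleton] at hy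
            rw [hmem]; tauto
          · refine mem_filter.2 ⟨SimpleGraph.mem_edgeFinset.2 hAa, ?_⟩
            intro y hy
            rw [vset_pair, mem_insert, mem_singleton] at hy
            rw [hmem]; tauto
          · refine mem_filter.2 ⟨SimpleGraph.mem_edgeFinset.2 hAb, ?_⟩
            intro y hy
            rw [vset_pair, mem_insert, mem_singleton] at hy
            rw [hmem]; tauto
        have hcard3 : ({s(a, b), s(v, a), s(v, b)} : Finset (Sym2 V)).card = 3 := by
          rw [card_insert_of_notMem, card_insert_of_notMem, card_singleton]
          · simp only [mem_singleton, Sym2.eq_iff]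
            tauto
          · simp only [mem_insert, mem_singleton, Sym2.eq_iff]
            push_neg
            tauto
        calc (3 : ℕ) = ({s(a, b), s(v, a), s(v, b)} : Finset (Sym2 V)).card := hcard3.symm
          _ ≤ ecount G t := card_le_card hsub
  · intro f hf g hg hfg
    simp only at hfg
    simp only [mem_coe, mem_filter] at hf hg
    have hvf : v ∉ vset f := by simpa using hf.1.2
    have hvg : v ∉ vset g := by simpa using hg.1.2
    have : vset f = vset g := by
      rw [← Finset.erase_insert hvf, ← Finset.erase_insert hvg, hfg]
    exact vset_injOn (not_isDiag_of_mem_edgeFinset G hf.1.1)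
      (not_isDiag_of_mem_edgeFinset G hg.1.1) this

lemma ecount_pos_iff (s : Finset V) :
    (∃ a ∈ s, ∃ b ∈ s, G.Adj a b) ↔ 0 < ecount G s := by
  constructor
  · rintro ⟨a, ha, b, hb, hadj⟩
    apply Finset.card_pos.2
    refine ⟨s(a, b), mem_filter.2 ⟨SimpleGraph.mem_edgeFinset.2 hadj, ?_⟩⟩
    rw [vset_pair]
    intro y hy
    rw [mem_insert, mem_singleton] at hy
    rcases hy with rfl | rfl
    · exact ha
    · exact hb
  · intro h
    obtain ⟨e, he⟩ := Finset.card_pos.1 h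
    rw [mem_filter] at he
    obtain ⟨a, b, rfl⟩ : ∃ a b, e = s(a, b) := by
      induction e with
      | _ a b => exact ⟨a, b, rfl⟩
    refine ⟨a, ?_, b, ?_, ?_⟩
    · exact he.2 (by rw [vset_pair]; simp)
    · exact he.2 (by rw [vset_pair]; simp)
    · exact (SimpleGraph.mem_edgeSet G).1 (SimpleGraph.mem_edgeFinset.1 he.1)

lemma dtri (v : V) :
    (G.edgeFinset.filter (fun e => v ∉ e)).card
        * ((G.edgeFinset.filter (fun e => v ∈ e)).card - 1)
      ≤ ((G.edgeFinset.powersetCard 2).filter (fun p => (p.sup vset).card ≠ 3)).card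
        + ((Finset.univ.powersetCard 3).filter (fun s => 3 ≤ ecount G s)).card := by
  classical
  have hA : ∀ f ∈ G.edgeFinset.filter (fun e => v ∉ e),
      (G.edgeFinset.filter (fun e => v ∈ e)).card - 1
        ≤ ((G.edgeFinset.filter (fun e => v ∈ e)).filter
            (fun e => Disjoint (vset e) (vset f))).card
          + (if ∀ y ∈ f, G.Adj v y then 1 else 0) := by
    intro f hf
    obtain ⟨a, b, rfl⟩ : ∃ a b, f = s(a, b) := by
      induction f with
      | _ a b => exact ⟨a, b, rfl⟩
    rw [mem_filter] at hf
    have hab : a ≠ b := by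
      intro h
      exact not_isDiag_of_mem_edgeFinset G hf.1 (by simp [h, Sym2.mk_isDiag_iff])
    have hva : v ≠ a := fun h => hf.2 (by simp [h, Sym2.mem_iff])
    have hvb : v ≠ b := fun h => hf.2 (by simp [h, Sym2.mem_iff])
    exact stepA G v a b hab hva hvb
  calc (G.edgeFinset.filter (fun e => v ∉ e)).card
        * ((G.edgeFinset.filter (fun e => v ∈ e)).card - 1)
      = ∑ _f ∈ G.edgeFinset.filter (fun e => v ∉ e),
          ((G.edgeFinset.filter (fun e => v ∈ e)).card - 1) := by
        rw [Finset.sum_const, smul_eq_mul]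
    _ ≤ ∑ f ∈ G.edgeFinset.filter (fun e => v ∉ e),
          (((G.edgeFinset.filter (fun e => v ∈ e)).filter
              (fun e => Disjoint (vset e) (vset f))).card
            + (if ∀ y ∈ f, G.Adj v y then 1 else 0)) := Finset.sum_le_sum hA
    _ = (∑ f ∈ G.edgeFinset.filter (fun e => v ∉ e),
          ((G.edgeFinset.filter (fun e => v ∈ e)).filter
              (fun e => Disjoint (vset e) (vset f))).card)
        + ∑ f ∈ G.edgeFinset.filter (fun e => v ∉ e),
            (if ∀ y ∈ f, G.Adj v y then 1 else 0) := Finset.sum_add_distrib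
    _ ≤ ((G.edgeFinset.powersetCard 2).filter (fun p => (p.sup vset).card ≠ 3)).card
        + ((Finset.univ.powersetCard 3).filter (fun s => 3 ≤ ecount G s)).card := by
        apply add_le_add (stepB G v)
        rw [← Finset.card_filter]
        exact stepC G v

end Graph

lemma per_count (E : ℕ) :
    2 * (E : ℤ) - 2 * (E.choose 2 : ℤ) + 2 * (if 3 ≤ E then 1 else 0)
      ≤ 2 * (if 0 < E then 1 else 0) := by
  match E with
  | 0 => simp
  | 1 => simp [Nat.choose]
  | 2 => norm_num [Nat.choose]
  | (n + 3) =>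
    have h1 : (n + 3) ≤ (n + 3).choose 2 := by
      rw [Nat.choose_two_right]
      rw [Nat.le_div_iff_mul_le (by norm_num)]
      have : n + 3 - 1 = n + 2 := by omega
      rw [this]
      nlinarith
    rw [if_pos (by omega), if_pos (by omega)]
    have h1' : ((n : ℤ) + 3) ≤ ((n + 3).choose 2 : ℤ) := by exact_mod_cast h1
    push_cast
    linarith

set_option maxHeartbeats 1000000 in
theorem stmt8 (x d k : ℕ) (hx : 4 < x) (hd : 1 ≤ d)
    (G : SimpleGraph (Fin (x + d))) [DecidableRel G.Adj]
    (hE : G.edgeFinset.card = x)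
    (v : Fin (x + d)) (hv : G.degree v = k) (hk2 : 2 ≤ k) (hkx : k < x) :
    (x : ℤ) ^ 2 + (2 * (d : ℤ) - 3) * (x : ℤ) +
        2 * ((k : ℤ) - 1) * ((x : ℤ) - (k : ℤ)) ≤
      2 * ({s : Finset (Fin (x + d)) |
              s.card = 3 ∧ ∃ a ∈ s, ∃ b ∈ s, G.Adj a b}.ncard : ℤ) := by
  classical
  have hset : {s : Finset (Fin (x + d)) | s.card = 3 ∧ ∃ a ∈ s, ∃ b ∈ s, G.Adj a b}
      = ↑((Finset.univ.powersetCard 3).filter (fun s => 0 < ecount G s)) := by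
    ext s
    simp only [Set.mem_setOf_eq, Finset.coe_filter, Finset.mem_powersetCard_univ]
    exact and_congr_right fun _ => ecount_pos_iff G s
  rw [hset, Set.ncard_coe_finset]
  have hcardV : Fintype.card (Fin (x + d)) = x + d := Fintype.card_fin _
  have h1 : ∑ s ∈ Finset.univ.powersetCard 3, ecount G s = x * (x + d - 2) := by
    rw [sum_ecount, hE, hcardV]
  have h2 := sum_choose_ecount G (V := Fin (x + d))
  set Q := ((G.edgeFinset.powersetCard 2).filter (fun p => (p.sup vset).card = 3)).card with hQ
  set D := ((G.edgeFinset.powersetCard 2).filter (fun p => ¬ (p.sup vset).card = 3)).card with hD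
  set Tri := ((Finset.univ.powersetCard 3).filter (fun s => 3 ≤ ecount G s)).card with hTri
  set Tc := ((Finset.univ.powersetCard 3).filter (fun s => 0 < ecount G s)).card with hTc
  have hQD : Q + D = x.choose 2 := by
    rw [hQ, hD, Finset.card_filter_add_card_filter_not, Finset.card_powersetCard, hE]
  -- summed per-triple inequality
  have hsum : 2 * ((∑ s ∈ Finset.univ.powersetCard 3, ecount G s : ℕ) : ℤ)
      - 2 * ((∑ s ∈ Finset.univ.powersetCard 3, (ecount G s).choose 2 : ℕ) : ℤ)
      + 2 * (Tri : ℤ) ≤ 2 * (Tc : ℤ) := by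
    have hle := Finset.sum_le_sum (s := Finset.univ.powersetCard 3)
      (f := fun s => 2 * (ecount G s : ℤ) - 2 * ((ecount G s).choose 2 : ℤ)
        + 2 * (if 3 ≤ ecount G s then 1 else 0))
      (g := fun s => 2 * (if 0 < ecount G s then (1 : ℤ) else 0))
      (fun s _ => per_count _)
    simp only [Finset.sum_add_distrib, Finset.sum_sub_distrib, ← Finset.mul_sum,
      Finset.sum_boole] at hle
    rw [hTri, hTc]
    push_cast
    convert hle using 2 <;> norm_num
  -- degree counts
  have hSv : (G.edgeFinset.filter (fun e => v ∈ e)).card = k := by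
    rw [← hv, ← SimpleGraph.card_incidenceFinset_eq_degree]
    congr 1
    rw [SimpleGraph.incidenceFinset_eq_filter]
  have hFsplit := Finset.card_filter_add_card_filter_not
    (s := G.edgeFinset) (p := fun e => v ∈ e)
  have hF : (G.edgeFinset.filter (fun e => v ∉ e)).card = x - k := by
    have : (G.edgeFinset.filter (fun e => ¬ v ∈ e)).card
        = (G.edgeFinset.filter (fun e => v ∉ e)).card := rfl
    omega
  have hdtri := dtri G v
  rw [hSv, hF, ← hD, ← hTri] at hdtri
  -- numeric facts
  have hchoose : 2 * x.choose 2 = x * (x - 1) := by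
    rw [Nat.choose_two_right]
    apply Nat.mul_div_cancel'
    have := Nat.even_mul_succ_self (x - 1)
    rw [Nat.sub_add_cancel (by omega)] at this
    rw [mul_comm]
    exact this.two_dvd
  -- assemble over ℤ
  rw [h1, h2] at hsum
  have c1 : ((x * (x + d - 2) : ℕ) : ℤ) = (x : ℤ) * ((x : ℤ) + (d : ℤ) - 2) := by
    push_cast [Nat.cast_sub (show 2 ≤ x + d by omega)]
    ring
  have c2 : ((x - k : ℕ) : ℤ) = (x : ℤ) - (k : ℤ) := by
    push_cast [Nat.cast_sub hkx.le]
    ring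
  have c3 : ((k - 1 : ℕ) : ℤ) = (k : ℤ) - 1 := by
    push_cast [Nat.cast_sub (show 1 ≤ k by omega)]
    ring
  have hQD' : (Q : ℤ) + (D : ℤ) = (x.choose 2 : ℤ) := by exact_mod_cast hQD
  have hchoose' : 2 * (x.choose 2 : ℤ) = (x : ℤ) * ((x : ℤ) - 1) := by
    have : ((2 * x.choose 2 : ℕ) : ℤ) = ((x * (x - 1) : ℕ) : ℤ) := by rw [hchoose]
    push_cast [Nat.cast_sub (show 1 ≤ x by omega)] at this
    linarith
  have hdtri' : ((x : ℤ) - (k : ℤ)) * ((k : ℤ) - 1) ≤ (D : ℤ) + (Tri : ℤ) := by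
    have : (((x - k) * (k - 1) : ℕ) : ℤ) ≤ ((D + Tri : ℕ) : ℤ) := by exact_mod_cast hdtri
    rw [Nat.cast_mul, c2, c3] at this
    push_cast at this
    linarith
  rw [c1] at hsum
  linarith [hsum, hQD', hchoose', hdtri']
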